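/- arXiv:1705.00478 — 2 statements merged into one kernel-verified Lean document; each statement's English description precedes it below -/
import Mathlib

section
/- For any timed causal space T = (aY, H, t), the prescription M(q) = (−t_{xy}, t_{yu}, t_{xy} − t_{yu}) ∈ L₄, for every ordered 4-tuple q = (x,y,z,u) of pairwise distinct points obtained from its cyclic order xyuz by fixing the initial point and transposing the two last entries, extended to all ordered nondegenerate 4-tuples by the equivariance M(σq) = sign(σ)·φ(σ)·M(q), defines unambiguously a map M : regP₄ → L₄ which is a sub-Möbius structure on S¹. -/
open Set
open scoped ENNReal

noncomputable section

namespace Paper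

/-- The pairs `(x,y)` and `(z,u)` of points of the circle separate each other:
`z` and `u` lie in different connected components of the complement of `{x,y}`. -/
def SeparatesPts (x y z u : Circle) : Prop :=
  z ∈ ({x, y}ᶜ : Set Circle) ∧ u ∈ ({x, y}ᶜ : Set Circle) ∧
    u ∉ connectedComponentIn ({x, y}ᶜ : Set Circle) z

/-- An event: an unordered pair of distinct points of the circle. -/
abbrev Event : Type := {e : Sym2 Circle // ¬ e.IsDiag}

/-- The underlying two-point subset of the circle of an event. -/
def EventPts (e : Event) : Set Circle := {x | x ∈ e.1}

/-- Two events separate each other as pairs of points on the circle. -/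
def EventSep (a b : Event) : Prop :=
  ∃ x y z u : Circle, a.1 = s(x, y) ∧ b.1 = s(z, u) ∧ SeparatesPts x y z u

/-- Two events are in the causal relation iff they do not separate each other. -/
def Causal (a b : Event) : Prop := ¬ EventSep a b

/-- Two events lie on a common light line iff they share a point. -/
def OnLight (a b : Event) : Prop := ∃ x : Circle, x ∈ a.1 ∧ x ∈ b.1

/-- Strong causal relation: causal and not on a common light line. -/
def StrongCausal (a b : Event) : Prop := Causal a b ∧ ¬ OnLight a b

/-- `U` is one of the two open arcs determined by the event `e`. -/
def IsOpenArc (e : Event) (U : Set Circle) : Prop :=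
  ∃ z, z ∉ EventPts e ∧ U = connectedComponentIn (EventPts e)ᶜ z

/-- `a ≤ b ≤ c`: the events `a` and `c` lie in the two (closed) arcs determined
by `b` on different sides of `b`. -/
def Between (a b c : Event) : Prop :=
  ∃ U V : Set Circle, IsOpenArc b U ∧ IsOpenArc b V ∧ U ≠ V ∧
    EventPts a ⊆ closure U ∧ EventPts c ⊆ closure V

/-- `a < b < c`. -/
def SBtw (a b c : Event) : Prop := Between a b c ∧ a ≠ b ∧ c ≠ b

/-- The event `d` is strictly between the events `a` and `c`: `a` and `c` lie in
different open arcs determined by `d`. -/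
def StrictlyBetween (d a c : Event) : Prop :=
  ∃ U V : Set Circle, IsOpenArc d U ∧ IsOpenArc d V ∧ U ≠ V ∧
    EventPts a ⊆ U ∧ EventPts c ⊆ V

/-- `ω` is an infinitely remote point of the semi-metric `d`. -/
def IsRemote (d : Circle → Circle → ℝ≥0∞) (ω : Circle) : Prop :=
  ∀ x, x ≠ ω → d x ω = ⊤

/-- A semi-metric: symmetric, vanishing exactly on the diagonal, with at most one
infinitely remote point. -/
structure IsSemiMetric (d : Circle → Circle → ℝ≥0∞) : Prop where
  symm : ∀ x y, d x y = d y x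
  eq_zero_iff : ∀ x y, d x y = 0 ↔ x = y
  top_remote : ∀ x y, d x y = ⊤ → ∃ ω, IsRemote d ω ∧ (x = ω ∨ y = ω)
  remote_unique : ∀ ω ω', IsRemote d ω → IsRemote d ω' → ω = ω'

/-- The semi-metric `d` has no infinitely remote point in the set `s`. -/
def AvoidsRemote (d : Circle → Circle → ℝ≥0∞) (s : Set Circle) : Prop :=
  ∀ ω ∈ s, ¬ IsRemote d ω

/-- Real-valued distance. -/
def dR (d : Circle → Circle → ℝ≥0∞) (x y : Circle) : ℝ := (d x y).toReal

/-- A Möbius structure on the circle: a class of pairwise Möbius equivalent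
semi-metrics (same cross-ratios on nondegenerate 4-tuples), containing for each
point a semi-metric with that point infinitely remote (metric inversion). -/
structure MoebiusStructure : Type where
  sems : Set (Circle → Circle → ℝ≥0∞)
  nonempty : sems.Nonempty
  isSemiMetric : ∀ d ∈ sems, IsSemiMetric d
  exists_remote : ∀ ω : Circle, ∃ d ∈ sems, IsRemote d ω
  compatible : ∀ d ∈ sems, ∀ d' ∈ sems, ∀ x y z u : Circle,
    x ≠ y → x ≠ z → x ≠ u → y ≠ z → y ≠ u → z ≠ u →
    AvoidsRemote d {x, y, z, u} → AvoidsRemote d' {x, y, z, u} →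
    dR d x z * dR d y u * (dR d' x u * dR d' y z)
      = dR d' x z * dR d' y u * (dR d x u * dR d y z)

/-- The open balls, centered at finite points, of the semi-metrics of `D`
having infinitely remote points. -/
def mBalls (D : Set (Circle → Circle → ℝ≥0∞)) : Set (Set Circle) :=
  {B | ∃ d ∈ D, ∃ ω : Circle, IsRemote d ω ∧ ∃ x : Circle, x ≠ ω ∧
        ∃ r : ℝ≥0∞, 0 < r ∧ B = {y | d x y < r}}

/-- Axiom (T): the `M`-topology on the circle is the standard one. -/
def AxiomT (M : MoebiusStructure) : Prop :=
  TopologicalSpace.generateFrom (mBalls M.sems)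
    = (inferInstance : TopologicalSpace Circle)

/-- Axiom (M): monotonicity. -/
def AxiomM (M : MoebiusStructure) : Prop :=
  ∀ x y z u : Circle, SeparatesPts x y z u →
    ∀ d ∈ M.sems, AvoidsRemote d {x, y, z, u} →
      max (dR d x z * dR d y u) (dR d x u * dR d y z) < dR d x y * dR d z u

/-- A monotone Möbius structure on the circle. -/
def IsMonotone (M : MoebiusStructure) : Prop := AxiomT M ∧ AxiomM M

/-- The pair of events `a = (x,y)`, `b = (z,u)` is `M`-harmonic:
`|xz|·|yu| = |xu|·|yz|`. -/
def MHarmonic (M : MoebiusStructure) (a b : Event) : Prop :=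
  ∃ x y z u : Circle, a.1 = s(x, y) ∧ b.1 = s(z, u) ∧
    ∀ d ∈ M.sems, AvoidsRemote d {x, y, z, u} →
      dR d x z * dR d y u = dR d x u * dR d y z

/-- The timelike line dual to the event `e`, for the Möbius structure `M`. -/
def hline (M : MoebiusStructure) (e : Event) : Set Event := {a | MHarmonic M a e}

/-- Axiom (h1). -/
def AxH1 (H : Set (Set Event)) (line : Event → Set Event) : Prop :=
  (∀ e, line e ∈ H) ∧ ∀ h ∈ H, ∃ e, h = line e

/-- Axiom (h2): any event on `h_e` separates `e`. -/
def AxH2 (line : Event → Set Event) : Prop := ∀ e a, a ∈ line e → EventSep a e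

/-- Axiom (h3): any two events on a timelike line are in the causal relation. -/
def AxH3 (line : Event → Set Event) : Prop :=
  ∀ e a b, a ∈ line e → b ∈ line e → Causal a b

/-- Axiom (h4): for any `x ∉ e` there is a unique event `x_e ∈ h_e` containing `x`. -/
def AxH4 (line : Event → Set Event) : Prop :=
  ∀ e : Event, ∀ x : Circle, x ∉ EventPts e → ∃! a : Event, a ∈ line e ∧ x ∈ a.1

/-- Axiom (h5): duality. -/
def AxH5 (line : Event → Set Event) : Prop := ∀ e a, a ∈ line e → e ∈ line a

/-- Axiom (h6): two distinct events lie on at most one common timelike line. -/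
def AxH6 (line : Event → Set Event) : Prop :=
  ∀ a b : Event, a ≠ b → ∀ e e',
    a ∈ line e → b ∈ line e → a ∈ line e' → b ∈ line e' → e = e'

/-- The projection `x_e`: the unique event of the timelike line `h_e` containing `x`
(junk value if there is none). -/
noncomputable def proj (line : Event → Set Event) (e : Event) (x : Circle) : Event :=
  letI := Classical.propDecidable (∃ a, a ∈ line e ∧ x ∈ a.1)
  if h : ∃ a, a ∈ line e ∧ x ∈ a.1 then h.choose else e

/-- Axiom (t1). -/
def AxT1 (t : Event → Event → ℝ) : Prop := ∀ a b, Causal a b → 0 ≤ t a b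

/-- Axiom (t2). -/
def AxT2 (t : Event → Event → ℝ) : Prop :=
  ∀ a b, Causal a b → (t a b = 0 ↔ OnLight a b)

/-- Axiom (t3). -/
def AxT3 (t : Event → Event → ℝ) : Prop := ∀ a b, Causal a b → t a b = t b a

/-- Axiom (t4a): timelike lines are `t`-geodesics. -/
def AxT4a (line : Event → Set Event) (t : Event → Event → ℝ) : Prop :=
  ∀ a, ∀ e e' e'', e ∈ line a → e' ∈ line a → e'' ∈ line a →
    Between e e' e'' → t e e' + t e' e'' = t e e''

/-- Axiom (t4b): events at any prescribed time on both sides. -/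
def AxT4b (line : Event → Set Event) (t : Event → Event → ℝ) : Prop :=
  ∀ a, ∀ e ∈ line a, ∀ s : ℝ, 0 < s →
    ∃ ep em, ep ∈ line a ∧ em ∈ line a ∧ SBtw em e ep ∧ t e ep = s ∧ t e em = s

/-- Axiom (t5). -/
def AxT5 (line : Event → Set Event) (t : Event → Event → ℝ) : Prop :=
  ∀ e d : Event, ∀ x y z u : Circle,
    e.1 = s(x, y) → d.1 = s(z, u) → StrongCausal e d →
    t (proj line e z) (proj line e u) = t (proj line d x) (proj line d y)

/-- Axiom (t6): harmonicity. -/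
def AxT6 (line : Event → Set Event) (t : Event → Event → ℝ) : Prop :=
  ∀ e d : Event, ∀ x y z u : Circle,
    e.1 = s(x, y) → d.1 = s(z, u) → d ∈ line e →
    ∀ a b : Event, a.1 = s(x, z) → b.1 = s(x, u) →
      t (proj line a y) (proj line a u) = t (proj line b y) (proj line b z)

/-- The time determined by a Möbius structure: `0` on light lines, and the
cross-ratio formula for events in the strong causal relation via a
common perpendicular. -/
def TimeSpec (M : MoebiusStructure) (t : Event → Event → ℝ) : Prop :=
  (∀ a b, OnLight a b → t a b = 0) ∧
  (∀ a b e : Event, a ∈ hline M e → b ∈ hline M e → a ≠ b →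
    ∀ x y z z' : Circle, e.1 = s(x, y) → z ∈ a.1 → z' ∈ b.1 →
      ∀ d ∈ M.sems, AvoidsRemote d {x, y, z, z'} →
        t a b = |Real.log (dR d x z' * dR d y z / (dR d x z * dR d y z'))|)

/-- The function `F_{ab}` of the hierarchy of time conditions, on events `d`
strictly between `(o,ω)` and `(o',ω')`, for `a = (o,o')`, `b = (ω,ω')`. -/
noncomputable def Fab (line : Event → Set Event) (t : Event → Event → ℝ)
    (o ω o' ω' : Circle) (d : Event) : ℝ :=
  (t (proj line d o) (proj line d ω) + t (proj line d o') (proj line d ω')) / 2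

end Paper

namespace Paper

/-- The defining property of the reflection `ρ_e` with respect to the event `e`. -/
def RefSpec (line : Event → Set Event) (e : Event) (ρ : Circle → Circle) : Prop :=
  (∀ p ∈ EventPts e, ρ p = p) ∧
    ∀ x, x ∉ EventPts e → ρ x ≠ x ∧ ∃ a ∈ line e, x ∈ a.1 ∧ ρ x ∈ a.1

/-- The label of a fixed-point-free involution of `Fin 4`
(the partner of `0`, shifted down by one). -/
def label (σ : Equiv.Perm (Fin 4)) : Fin 3 :=
  if σ 0 = 1 then 0 else if σ 0 = 2 then 1 else 2

/-- The three fixed-point-free involutions of `Fin 4`, i.e. the three partitions of a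
4-element set into pairs of opposite edges. -/
def inv3 : Fin 3 → Equiv.Perm (Fin 4) :=
  ![Equiv.swap 0 1 * Equiv.swap 2 3, Equiv.swap 0 2 * Equiv.swap 1 3,
    Equiv.swap 0 3 * Equiv.swap 1 2]

/-- The cross-ratio homomorphism `φ : S₄ → S₃`, acting on the labels of the
partitions into pairs of opposite edges by conjugation. -/
def permAct (π : Equiv.Perm (Fin 4)) (j : Fin 3) : Fin 3 := label (π * inv3 j * π⁻¹)

/-- A sub-Möbius structure on the circle: a map `regP₄ → L₄` equivariant with respect
to the signed cross-ratio homomorphism. -/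
def SubMoebius (M : (Fin 4 → Circle) → Fin 3 → ℝ) : Prop :=
  (∀ q : Fin 4 → Circle, Function.Injective q → M q 0 + M q 1 + M q 2 = 0) ∧
  ∀ q : Fin 4 → Circle, Function.Injective q → ∀ π : Equiv.Perm (Fin 4), ∀ j : Fin 3,
    M (q ∘ π) j = ((Equiv.Perm.sign π : ℤ) : ℝ) * M q (permAct π j)

/-- The base values of the sub-Möbius structure associated with a timed causal space:
for a 4-tuple `q = (x,y,z,u)` whose cyclic order is `xyuz` (i.e. the pairs `(x,u)` and
`(y,z)` separate each other), `M(q) = (−t_{xy}, t_{yu}, t_{xy} − t_{yu})`, where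
`t_{xy}` is the time between the projections of `u`, `z` to the timelike line dual to
the event `(x,y)`, and `t_{yu}` the time between the projections of `z`, `x` to the
timelike line dual to the event `(y,u)`. -/
def BaseSpec (line : Event → Set Event) (t : Event → Event → ℝ)
    (M : (Fin 4 → Circle) → Fin 3 → ℝ) : Prop :=
  ∀ q : Fin 4 → Circle, Function.Injective q →
    SeparatesPts (q 0) (q 3) (q 1) (q 2) →
    ∀ exy eyu : Event, exy.1 = s(q 0, q 1) → eyu.1 = s(q 1, q 3) →
      M q 0 = -(t (proj line exy (q 3)) (proj line exy (q 2))) ∧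
      M q 1 = t (proj line eyu (q 2)) (proj line eyu (q 0)) ∧
      M q 2 = t (proj line exy (q 3)) (proj line exy (q 2))
                - t (proj line eyu (q 2)) (proj line eyu (q 0))

/-- The three cross-ratios `(ln cr₁, ln cr₂, ln cr₃)` of a 4-tuple with respect to a
semi-metric. -/
noncomputable def crMap (dm : Circle → Circle → ℝ≥0∞) (q : Fin 4 → Circle) :
    Fin 3 → ℝ :=
  ![Real.log (dR dm (q 0) (q 2) * dR dm (q 1) (q 3)
      / (dR dm (q 0) (q 3) * dR dm (q 1) (q 2))),
    Real.log (dR dm (q 0) (q 3) * dR dm (q 1) (q 2)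
      / (dR dm (q 0) (q 1) * dR dm (q 2) (q 3))),
    Real.log (dR dm (q 0) (q 1) * dR dm (q 2) (q 3)
      / (dR dm (q 1) (q 3) * dR dm (q 0) (q 2)))]

/-- The semi-metrics whose cross-ratio map is the given map `M`. -/
def mapSems (M : (Fin 4 → Circle) → Fin 3 → ℝ) : Set (Circle → Circle → ℝ≥0∞) :=
  {dm | IsSemiMetric dm ∧ ∀ q : Fin 4 → Circle, Function.Injective q →
    AvoidsRemote dm (Set.range q) → ∀ j, M q j = crMap dm q j}

/-- Harmonicity of a pair of events with respect to a map-form Möbius structure `M`: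
`ln cr₃(u,x,y,z) = 0`. -/
def MapHarmonic (M : (Fin 4 → Circle) → Fin 3 → ℝ) (a b : Event) : Prop :=
  ∃ x y z u : Circle, a.1 = s(x, y) ∧ b.1 = s(z, u) ∧
    Function.Injective ![u, x, y, z] ∧ M ![u, x, y, z] 2 = 0

/-- The 4-tuple `(x₁,x₂,x₃,x₄)` is harmonic with respect to the Möbius structure `M`:
`|x₁x₃|·|x₂x₄| = |x₁x₄|·|x₂x₃|`. -/
def Harm4 (M : MoebiusStructure) (x₁ x₂ x₃ x₄ : Circle) : Prop :=
  ∀ d ∈ M.sems, AvoidsRemote d {x₁, x₂, x₃, x₄} →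
    dR d x₁ x₃ * dR d x₂ x₄ = dR d x₁ x₄ * dR d x₂ x₃

/-- The cross-ratio `cr₁`. -/
noncomputable def cr1R (d : Circle → Circle → ℝ≥0∞) (a b c e : Circle) : ℝ :=
  dR d a c * dR d b e / (dR d a e * dR d b c)

/-- A tuple of points of the circle is in cyclic order. -/
def InCyclicOrder {n : ℕ} (q : Fin n → Circle) : Prop :=
  ∀ i j k l : Fin n, i < j → j < k → k < l → SeparatesPts (q i) (q k) (q j) (q l)

/-- Increment Axiom (I). -/
def AxiomI (M : MoebiusStructure) : Prop :=
  ∀ q : Fin 7 → Circle, Function.Injective q → InCyclicOrder q →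
    Harm4 M (q 0) (q 2) (q 4) (q 5) → Harm4 M (q 1) (q 2) (q 3) (q 5) →
    ∀ d ∈ M.sems, AvoidsRemote d (Set.range q) →
      cr1R d (q 3) (q 4) (q 5) (q 6) < cr1R d (q 0) (q 1) (q 5) (q 6)

/-- The Lambert quadrilateral inequality (LQI). -/
def LQI (line : Event → Set Event) (t : Event → Event → ℝ) : Prop :=
  ∀ a b : Event, ∀ o o' ω ω' : Circle,
    a.1 = s(o, o') → b.1 = s(ω, ω') → StrongCausal a b → SeparatesPts o ω' o' ω →
    ∀ eA eB : Event, eA.1 = s(o, ω) → eB.1 = s(o', ω') →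
    ∀ d₀ : Event, a ∈ line d₀ → b ∈ line d₀ →
    ∀ d : Event, StrictlyBetween d eA eB → d ≠ d₀ → a ∈ line d →
      Fab line t o ω o' ω' d₀ < Fab line t o ω o' ω' d

/-- `g` is an `M`-automorphism: a bijection of the circle preserving the cross-ratios
of the Möbius structure `M`. -/
def MAut (M : MoebiusStructure) (g : Circle ≃ Circle) : Prop :=
  ∀ d ∈ M.sems, ∀ d' ∈ M.sems, ∀ x y z u : Circle,
    x ≠ y → x ≠ z → x ≠ u → y ≠ z → y ≠ u → z ≠ u →
    AvoidsRemote d {x, y, z, u} → AvoidsRemote d' {g x, g y, g z, g u} →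
    dR d' (g x) (g z) * dR d' (g y) (g u) * (dR d x u * dR d y z)
      = dR d x z * dR d y u * (dR d' (g x) (g u) * dR d' (g y) (g z))

theorem map_not_isDiag (g : Circle ≃ Circle) (z : Sym2 Circle) (h : ¬ z.IsDiag) :
    ¬ (z.map g).IsDiag := by
  induction z using Sym2.ind with
  | _ x y =>
    rw [Sym2.map_pair_eq, Sym2.mk_isDiag_iff]
    rw [Sym2.mk_isDiag_iff] at h
    exact fun hg => h (g.injective hg)

/-- The map of events induced by a bijection of the circle. -/
def emap (g : Circle ≃ Circle) (e : Event) : Event :=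
  ⟨e.1.map g, map_not_isDiag g e.1 e.2⟩

end Paper

namespace Paper


lemma two_pi_pos : (0:ℝ) < 2 * Real.pi := by positivity

lemma exp_inj_window {a b : ℝ} (h : |a - b| < 2 * Real.pi) :
    Circle.exp a = Circle.exp b ↔ a = b := by
  constructor
  · intro he
    obtain ⟨m, hm⟩ := Circle.exp_eq_exp.mp he
    have hab : a - b = (m:ℝ) * (2 * Real.pi) := by linarith
    rw [hab, abs_mul, abs_of_pos two_pi_pos] at h
    have h1 : |(m:ℝ)| < 1 := by nlinarith [two_pi_pos]
    rw [← Int.cast_abs] at h1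
    have h2 : |m| < 1 := by exact_mod_cast h1
    have h3 := abs_lt.mp h2
    have : m = 0 := by omega
    simp [this] at hm; linarith
  · rintro rfl; rfl

lemma exp_ne_window {a b : ℝ} (h1 : a < b) (h2 : b < a + 2 * Real.pi) :
    Circle.exp a ≠ Circle.exp b := by
  intro he
  have : a = b := (exp_inj_window (by rw [abs_sub_lt_iff]; constructor <;> linarith)).mp he
  linarith

lemma exists_rep (z : Circle) (a : ℝ) :
    ∃ θ ∈ Ico a (a + 2 * Real.pi), Circle.exp θ = z := by
  refine ⟨toIcoMod two_pi_pos a (Complex.arg z), toIcoMod_mem_Ico two_pi_pos a _, ?_⟩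
  have h : toIcoMod two_pi_pos a (Complex.arg z)
      = Complex.arg z - toIcoDiv two_pi_pos a (Complex.arg z) • (2 * Real.pi) := rfl
  rw [h]
  conv_rhs => rw [← Circle.exp_arg z]
  rw [Circle.exp_eq_exp]
  exact ⟨-(toIcoDiv two_pi_pos a (Complex.arg z)), by push_cast [zsmul_eq_mul]; ring⟩

section arcs
variable {c d : ℝ}

/-- not in image of an interval, when δ is "window-compatible": any point of
`Ioo lo hi` differs from δ by less than 2π in abs value. -/
lemma notMem_image_Ioo {lo hi δ : ℝ} (h1 : hi ≤ δ + 2*Real.pi) (h2 : δ ≤ lo + 2*Real.pi)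
    (hδ : δ ∉ Ioo lo hi) : Circle.exp δ ∉ Circle.exp '' Ioo lo hi := by
  rintro ⟨θ, hθ, he⟩
  have : θ = δ := (exp_inj_window (by
    rw [abs_sub_lt_iff]; constructor
    · nlinarith [hθ.1, hθ.2, two_pi_pos]
    · nlinarith [hθ.1, hθ.2, two_pi_pos])).mp he
  exact hδ (this ▸ hθ)

lemma isOpen_arc1 (hcd : c < d) (hd : d < c + 2*Real.pi) :
    IsOpen (Circle.exp '' Ioo c d) := by
  have hK : IsClosed (Circle.exp '' Icc d (c + 2*Real.pi)) :=
    ((isCompact_Icc).image Circle.exp.continuous).isClosed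
  have he : Circle.exp '' Ioo c d = (Circle.exp '' Icc d (c + 2*Real.pi))ᶜ := by
    ext z
    simp only [mem_compl_iff]
    constructor
    · rintro ⟨θ, hθ, rfl⟩ ⟨θ', hθ', he'⟩
      have : θ' = θ := (exp_inj_window (by
        rw [abs_sub_lt_iff]; constructor
        · nlinarith [hθ.1, hθ.2, hθ'.1, hθ'.2]
        · nlinarith [hθ.1, hθ.2, hθ'.1, hθ'.2])).mp he'
      subst this
      exact absurd hθ.2 (not_lt.mpr hθ'.1)
    · intro hz
      obtain ⟨θ, hθ, rfl⟩ := exists_rep z c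
      rcases eq_or_lt_of_le hθ.1 with h | h
      · exact absurd ⟨c + 2*Real.pi, ⟨le_of_lt hd, le_refl _⟩, by
          rw [← h]; exact (Circle.exp_add_two_pi c)⟩ hz
      rcases lt_or_ge θ d with h2 | h2
      · exact ⟨θ, ⟨h, h2⟩, rfl⟩
      · exact absurd ⟨θ, ⟨h2, le_of_lt hθ.2⟩, rfl⟩ hz
  rw [he]; exact hK.isOpen_compl

lemma arcs_disjoint (hcd : c < d) (hd : d < c + 2*Real.pi) :
    Disjoint (Circle.exp '' Ioo c d) (Circle.exp '' Ioo d (c + 2*Real.pi)) := by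
  rw [disjoint_left]
  rintro z ⟨θ, hθ, rfl⟩ hz
  refine notMem_image_Ioo ?_ ?_ ?_ hz
  · linarith [hθ.1, hθ.2]
  · linarith [hθ.1, hθ.2, two_pi_pos]
  · rintro ⟨h1', h2'⟩; exact absurd hθ.2 (not_lt.mpr (le_of_lt h1'))

lemma isOpen_arc2 (hcd : c < d) (hd : d < c + 2*Real.pi) :
    IsOpen (Circle.exp '' Ioo d (c + 2*Real.pi)) := by
  have hK : IsClosed (Circle.exp '' Icc c d) :=
    ((isCompact_Icc).image Circle.exp.continuous).isClosed
  have he : Circle.exp '' Ioo d (c + 2*Real.pi) = (Circle.exp '' Icc c d)ᶜ := by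
    ext z
    simp only [mem_compl_iff]
    constructor
    · rintro ⟨θ, hθ, rfl⟩ ⟨θ', hθ', he'⟩
      have : θ' = θ := (exp_inj_window (by
        rw [abs_sub_lt_iff]; constructor
        · nlinarith [hθ.1, hθ.2, hθ'.1, hθ'.2]
        · nlinarith [hθ.1, hθ.2, hθ'.1, hθ'.2, two_pi_pos])).mp he'
      subst this
      exact absurd hθ.1 (not_lt.mpr hθ'.2)
    · intro hz
      obtain ⟨θ, hθ, rfl⟩ := exists_rep z c
      rcases le_or_gt θ d with h2 | h2
      · exact absurd ⟨θ, ⟨hθ.1, h2⟩, rfl⟩ hz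
      · exact ⟨θ, ⟨h2, hθ.2⟩, rfl⟩
  rw [he]; exact hK.isOpen_compl

lemma compl_pair_eq_union (hcd : c < d) (hd : d < c + 2*Real.pi) :
    ({Circle.exp c, Circle.exp d}ᶜ : Set Circle)
      = Circle.exp '' Ioo c d ∪ Circle.exp '' Ioo d (c + 2*Real.pi) := by
  ext z
  simp only [mem_compl_iff, mem_insert_iff, mem_singleton_iff, mem_union, not_or]
  constructor
  · rintro ⟨hzc, hzd⟩
    obtain ⟨θ, hθ, rfl⟩ := exists_rep z c
    have h : c < θ := lt_of_le_of_ne hθ.1 (fun h => hzc (by rw [h]))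
    rcases lt_trichotomy θ d with h2 | h2 | h2
    · exact Or.inl ⟨θ, ⟨h, h2⟩, rfl⟩
    · exact absurd (by rw [h2]) hzd
    · exact Or.inr ⟨θ, ⟨h2, hθ.2⟩, rfl⟩
  · rintro (⟨θ, hθ, rfl⟩ | ⟨θ, hθ, rfl⟩)
    · refine ⟨fun h => ?_, fun h => ?_⟩
      · exact exp_ne_window hθ.1 (by linarith [hθ.2]) h.symm
      · exact exp_ne_window hθ.2 (by linarith [hθ.1, two_pi_pos]) h
    · refine ⟨fun h => ?_, fun h => ?_⟩
      · have h' : Circle.exp θ = Circle.exp (c + 2*Real.pi) := by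
          rw [h, Circle.exp_add_two_pi c]
        exact exp_ne_window hθ.2 (by linarith [hθ.1, two_pi_pos]) h'
      · exact exp_ne_window hθ.1 (by linarith [hθ.2]) h.symm

lemma connComp_arc1 (hcd : c < d) (hd : d < c + 2*Real.pi) {θ : ℝ}
    (hθ : θ ∈ Ioo c d) :
    connectedComponentIn ({Circle.exp c, Circle.exp d}ᶜ : Set Circle) (Circle.exp θ)
      = Circle.exp '' Ioo c d := by
  have hU : IsOpen (Circle.exp '' Ioo c d) := isOpen_arc1 hcd hd
  have hV : IsOpen (Circle.exp '' Ioo d (c + 2*Real.pi)) := isOpen_arc2 hcd hd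
  have hdisj := arcs_disjoint hcd hd
  have hS := compl_pair_eq_union hcd hd
  have hmem : Circle.exp θ ∈ Circle.exp '' Ioo c d := mem_image_of_mem _ hθ
  apply Subset.antisymm
  · apply IsPreconnected.subset_left_of_subset_union hU hV hdisj
    · rw [← hS]; exact connectedComponentIn_subset _ _
    · exact ⟨_, mem_connectedComponentIn (by rw [hS]; exact Or.inl hmem), hmem⟩
    · exact isPreconnected_connectedComponentIn
  · apply IsPreconnected.subset_connectedComponentIn
    · exact (isPreconnected_Ioo).image _ (Circle.exp.continuous.continuousOn)
    · exact hmem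
    · rw [hS]; exact subset_union_left

lemma connComp_arc2 (hcd : c < d) (hd : d < c + 2*Real.pi) {θ : ℝ}
    (hθ : θ ∈ Ioo d (c + 2*Real.pi)) :
    connectedComponentIn ({Circle.exp c, Circle.exp d}ᶜ : Set Circle) (Circle.exp θ)
      = Circle.exp '' Ioo d (c + 2*Real.pi) := by
  have hU : IsOpen (Circle.exp '' Ioo c d) := isOpen_arc1 hcd hd
  have hV : IsOpen (Circle.exp '' Ioo d (c + 2*Real.pi)) := isOpen_arc2 hcd hd
  have hdisj := arcs_disjoint hcd hd
  have hS := compl_pair_eq_union hcd hd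
  have hmem : Circle.exp θ ∈ Circle.exp '' Ioo d (c + 2*Real.pi) := mem_image_of_mem _ hθ
  apply Subset.antisymm
  · apply IsPreconnected.subset_left_of_subset_union hV hU hdisj.symm
    · rw [union_comm, ← hS]
      exact connectedComponentIn_subset _ _
    · exact ⟨_, mem_connectedComponentIn (by rw [hS]; exact Or.inr hmem), hmem⟩
    · exact isPreconnected_connectedComponentIn
  · apply IsPreconnected.subset_connectedComponentIn
    · exact (isPreconnected_Ioo).image _ (Circle.exp.continuous.continuousOn)
    · exact hmem
    · rw [hS]; exact subset_union_right

/-- Key characterization of separation via angles. -/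
lemma sep_char {a b γ δ : ℝ} (hb : b ∈ Ioo a (a + 2*Real.pi))
    (hγ : γ ∈ Ioo a (a + 2*Real.pi)) (hδ : δ ∈ Ioo a (a + 2*Real.pi))
    (hγb : γ ≠ b) (hδb : δ ≠ b) :
    SeparatesPts (Circle.exp a) (Circle.exp b) (Circle.exp γ) (Circle.exp δ)
      ↔ ((γ < b ∧ b < δ) ∨ (δ < b ∧ b < γ)) := by
  have hSγ : Circle.exp γ ∈ ({Circle.exp a, Circle.exp b}ᶜ : Set Circle) := by
    rw [compl_pair_eq_union hb.1 hb.2]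
    rcases lt_or_gt_of_ne hγb with h | h
    · exact Or.inl ⟨γ, ⟨hγ.1, h⟩, rfl⟩
    · exact Or.inr ⟨γ, ⟨h, hγ.2⟩, rfl⟩
  have hSδ : Circle.exp δ ∈ ({Circle.exp a, Circle.exp b}ᶜ : Set Circle) := by
    rw [compl_pair_eq_union hb.1 hb.2]
    rcases lt_or_gt_of_ne hδb with h | h
    · exact Or.inl ⟨δ, ⟨hδ.1, h⟩, rfl⟩
    · exact Or.inr ⟨δ, ⟨h, hδ.2⟩, rfl⟩
  constructor
  · rintro ⟨-, -, hncomp⟩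
    rcases lt_or_gt_of_ne hγb with h | h <;> rcases lt_or_gt_of_ne hδb with h' | h'
    · exact absurd (by
        rw [connComp_arc1 hb.1 hb.2 ⟨hγ.1, h⟩]
        exact mem_image_of_mem _ ⟨hδ.1, h'⟩) hncomp
    · exact Or.inl ⟨h, h'⟩
    · exact Or.inr ⟨h', h⟩
    · exact absurd (by
        rw [connComp_arc2 hb.1 hb.2 ⟨h, hγ.2⟩]
        exact mem_image_of_mem _ ⟨h', hδ.2⟩) hncomp
  · intro hcase
    refine ⟨hSγ, hSδ, ?_⟩
    rcases hcase with ⟨h1, h2⟩ | ⟨h1, h2⟩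
    · rw [connComp_arc1 hb.1 hb.2 ⟨hγ.1, h1⟩]
      exact notMem_image_Ioo (by linarith [two_pi_pos]) (by linarith [hδ.2, hγ.1])
        (fun hc => absurd hc.2 (not_lt.mpr (le_of_lt h2)))
    · rw [connComp_arc2 hb.1 hb.2 ⟨h2, hγ.2⟩]
      exact notMem_image_Ioo (by linarith [hδ.1]) (by linarith [two_pi_pos])
        (fun hc => absurd hc.1 (not_lt.mpr (le_of_lt h1)))

end arcs

/-! ### Abstract separation lemmas -/

lemma sep_swap_right {x y z u : Circle} (h : SeparatesPts x y z u) :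
    SeparatesPts x y u z := by
  obtain ⟨hz, hu, hcomp⟩ := h
  refine ⟨hu, hz, fun hc => hcomp ?_⟩
  rw [← connectedComponentIn_eq hc]
  exact mem_connectedComponentIn hu

lemma sep_swap_left {x y z u : Circle} (h : SeparatesPts x y z u) :
    SeparatesPts y x z u := by
  unfold SeparatesPts at *
  rwa [Set.pair_comm y x]

lemma exp_ne_exp_of_ne {θ θ' : ℝ} {p p' : Circle} (hp : Circle.exp θ = p)
    (hp' : Circle.exp θ' = p') (h : p ≠ p') : θ ≠ θ' := by
  rintro rfl; exact h (hp ▸ hp' ▸ rfl)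

/-- representation of four distinct points by angles based at the first -/
lemma rep4 (w x y z : Circle) (hx : x ≠ w) (hy : y ≠ w) (hz : z ≠ w) :
    ∃ a b c d : ℝ, Circle.exp a = w ∧ Circle.exp b = x ∧ Circle.exp c = y ∧
      Circle.exp d = z ∧ b ∈ Ioo a (a + 2*Real.pi) ∧ c ∈ Ioo a (a + 2*Real.pi) ∧
      d ∈ Ioo a (a + 2*Real.pi) := by
  obtain ⟨b, hb, hbe⟩ := exists_rep x (Complex.arg w)
  obtain ⟨c, hc, hce⟩ := exists_rep y (Complex.arg w)
  obtain ⟨d, hd, hde⟩ := exists_rep z (Complex.arg w)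
  set a := Complex.arg (w : ℂ) with ha
  have hae : Circle.exp a = w := Circle.exp_arg w
  have hb' : a < b := lt_of_le_of_ne hb.1 (fun h => hx (by rw [← hbe, ← h, hae]))
  have hc' : a < c := lt_of_le_of_ne hc.1 (fun h => hy (by rw [← hce, ← h, hae]))
  have hd' : a < d := lt_of_le_of_ne hd.1 (fun h => hz (by rw [← hde, ← h, hae]))
  exact ⟨a, b, c, d, hae, hbe, hce, hde, ⟨hb', hb.2⟩, ⟨hc', hc.2⟩, ⟨hd', hd.2⟩⟩

/-- pair-swap symmetry of separation -/
lemma sep_pair_swap {w x y z : Circle} (hxw : x ≠ w) (hyw : y ≠ w) (hzw : z ≠ w)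
    (hxy : x ≠ y) (hxz : x ≠ z) (hyz : y ≠ z)
    (h : SeparatesPts w x y z) : SeparatesPts y z w x := by
  obtain ⟨a, b, c, d, hae, hbe, hce, hde, hb, hc, hd⟩ := rep4 w x y z hxw hyw hzw
  have hcb : c ≠ b := exp_ne_exp_of_ne hce hbe hxy.symm
  have hdb : d ≠ b := exp_ne_exp_of_ne hde hbe hxz.symm
  have hdc : d ≠ c := exp_ne_exp_of_ne hde hce hyz.symm
  have hae' : Circle.exp (a + 2*Real.pi) = w := by rw [Circle.exp_add_two_pi]; exact hae
  rw [← hae, ← hbe, ← hce, ← hde] at h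
  rw [sep_char hb hc hd hcb hdb] at h
  have hawin : a + 2*Real.pi ∈ Ioo c (c + 2*Real.pi) := ⟨hc.2, by linarith [hc.1]⟩
  rcases h with ⟨h1, h2⟩ | ⟨h1, h2⟩
  · -- c < b, b < d : reps from c : base pair (c, d); others (a + 2π, b)
    have hwin : b ∈ Ioo c (c + 2*Real.pi) := ⟨h1, by linarith [hb.2, hc.1]⟩
    have hdwin : d ∈ Ioo c (c + 2*Real.pi) := ⟨by linarith, by linarith [hd.2, hc.1]⟩
    rw [← hce, ← hde, ← hae', ← hbe]
    rw [sep_char hdwin hawin hwin (exp_ne_exp_of_ne hae' hde hzw.symm) hdb.symm]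
    exact Or.inr ⟨h2, hd.2⟩
  · -- d < b, b < c : reps from c : base pair (c, d+2π); others (a + 2π, b+2π)
    have hde' : Circle.exp (d + 2*Real.pi) = z := by rw [Circle.exp_add_two_pi]; exact hde
    have hbe' : Circle.exp (b + 2*Real.pi) = x := by rw [Circle.exp_add_two_pi]; exact hbe
    have hdwin : d + 2*Real.pi ∈ Ioo c (c + 2*Real.pi) :=
      ⟨by linarith [hd.1, hc.2], by linarith⟩
    have hbwin : b + 2*Real.pi ∈ Ioo c (c + 2*Real.pi) :=
      ⟨by linarith [hb.1, hc.2], by linarith⟩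
    rw [← hce, ← hde', ← hae', ← hbe']
    rw [sep_char hdwin hawin hbwin (exp_ne_exp_of_ne hae' hde' hzw.symm)
      (exp_ne_exp_of_ne hbe' hde' hxz)]
    exact Or.inl ⟨by linarith [hd.1], by linarith [h1]⟩

/-- exclusivity: at most one pairing separates -/
lemma sep_excl {w x y z : Circle} (hxw : x ≠ w) (hyw : y ≠ w) (hzw : z ≠ w)
    (hxy : x ≠ y) (hxz : x ≠ z) (hyz : y ≠ z)
    (h : SeparatesPts w x y z) : ¬ SeparatesPts w y x z := by
  obtain ⟨a, b, c, d, hae, hbe, hce, hde, hb, hc, hd⟩ := rep4 w x y z hxw hyw hzw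
  have hcb : c ≠ b := exp_ne_exp_of_ne hce hbe hxy.symm
  have hdb : d ≠ b := exp_ne_exp_of_ne hde hbe hxz.symm
  have hdc : d ≠ c := exp_ne_exp_of_ne hde hce hyz.symm
  rw [← hae, ← hbe, ← hce, ← hde] at h ⊢
  rw [sep_char hb hc hd hcb hdb] at h
  rw [sep_char hc hb hd hcb.symm hdc]
  rcases h with ⟨h1, h2⟩ | ⟨h1, h2⟩ <;> rintro (⟨h3, h4⟩ | ⟨h3, h4⟩) <;> linarith

/-- totality: at least one pairing separates -/
lemma sep_total {w x y z : Circle} (hxw : x ≠ w) (hyw : y ≠ w) (hzw : z ≠ w)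
    (hxy : x ≠ y) (hxz : x ≠ z) (hyz : y ≠ z) :
    SeparatesPts w x y z ∨ SeparatesPts w y x z ∨ SeparatesPts w z x y := by
  obtain ⟨a, b, c, d, hae, hbe, hce, hde, hb, hc, hd⟩ := rep4 w x y z hxw hyw hzw
  have hcb : c ≠ b := exp_ne_exp_of_ne hce hbe hxy.symm
  have hdb : d ≠ b := exp_ne_exp_of_ne hde hbe hxz.symm
  have hdc : d ≠ c := exp_ne_exp_of_ne hde hce hyz.symm
  rw [← hae, ← hbe, ← hce, ← hde]
  rw [sep_char hb hc hd hcb hdb, sep_char hc hb hd hcb.symm hdc,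
    sep_char hd hb hc hdb.symm hdc.symm]
  rcases lt_or_gt_of_ne hcb with h1 | h1 <;> rcases lt_or_gt_of_ne hdb with h2 | h2 <;>
    rcases lt_or_gt_of_ne hdc with h3 | h3 <;>
    first
      | (exact Or.inl (Or.inl ⟨by linarith, by linarith⟩))
      | (exact Or.inl (Or.inr ⟨by linarith, by linarith⟩))
      | (exact Or.inr (Or.inl (Or.inl ⟨by linarith, by linarith⟩)))
      | (exact Or.inr (Or.inl (Or.inr ⟨by linarith, by linarith⟩)))
      | (exact Or.inr (Or.inr (Or.inl ⟨by linarith, by linarith⟩)))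
      | (exact Or.inr (Or.inr (Or.inr ⟨by linarith, by linarith⟩)))


/-! ### Events and projections -/

lemma one_ne_exp_pi : (1 : Circle) ≠ Circle.exp Real.pi := by
  have h := exp_ne_window (a := 0) (b := Real.pi) Real.pi_pos
    (by linarith [Real.pi_pos])
  rwa [Circle.exp_zero] at h

lemma junk_not_diag : ¬ (s((1:Circle), Circle.exp Real.pi)).IsDiag := by
  rw [Sym2.mk_isDiag_iff]; exact one_ne_exp_pi

open Classical in
/-- The event with the two given (distinct) endpoints. -/
noncomputable def E2 (x y : Circle) : Event :=
  if h : x = y then ⟨s((1:Circle), Circle.exp Real.pi), junk_not_diag⟩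
  else ⟨s(x, y), by rwa [Sym2.mk_isDiag_iff]⟩

lemma E2_fst {x y : Circle} (h : x ≠ y) : (E2 x y).1 = s(x, y) := by
  rw [E2]
  rw [dif_neg h]

lemma E2_comm {x y : Circle} : E2 x y = E2 y x := by
  rcases eq_or_ne x y with rfl | h
  · rfl
  · apply Subtype.ext
    rw [E2_fst h, E2_fst h.symm]
    exact Sym2.eq_swap

lemma eventPts_E2 {x y : Circle} (h : x ≠ y) : EventPts (E2 x y) = {x, y} := by
  ext p
  simp only [EventPts, mem_setOf_eq, E2_fst h, Sym2.mem_iff, mem_insert_iff,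
    mem_singleton_iff]

section TimeLemmas

variable (line : Event → Set Event) (t : Event → Event → ℝ)

lemma proj_spec (h4 : AxH4 line) {e : Event} {x : Circle} (hx : x ∉ EventPts e) :
    proj line e x ∈ line e ∧ x ∈ (proj line e x).1 := by
  have hex : ∃ a, a ∈ line e ∧ x ∈ a.1 := (h4 e x hx).exists
  rw [proj]
  rw [dif_pos hex]
  exact hex.choose_spec

lemma tau_comm (h3 : AxH3 line) (h4 : AxH4 line) (ht3 : AxT3 t) {a b p r : Circle}
    (hab : a ≠ b) (hpa : p ≠ a) (hpb : p ≠ b) (hra : r ≠ a) (hrb : r ≠ b) :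
    t (proj line (E2 a b) p) (proj line (E2 a b) r)
      = t (proj line (E2 a b) r) (proj line (E2 a b) p) := by
  have hp : p ∉ EventPts (E2 a b) := by
    rw [eventPts_E2 hab]; rintro (h | h); exacts [hpa h, hpb h]
  have hr : r ∉ EventPts (E2 a b) := by
    rw [eventPts_E2 hab]; rintro (h | h); exacts [hra h, hrb h]
  exact ht3 _ _ (h3 (E2 a b) _ _ (proj_spec line h4 hp).1 (proj_spec line h4 hr).1)

lemma causal_E2 {a b c d : Circle} (hab : a ≠ b) (hcd : c ≠ d)
    (hac : a ≠ c) (had : a ≠ d) (hbc : b ≠ c) (hbd : b ≠ d)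
    (hsep : SeparatesPts a c b d) : Causal (E2 a b) (E2 c d) := by
  have hns : ¬ SeparatesPts a b c d :=
    sep_excl hac.symm hab.symm had.symm (fun h => hbc h.symm) hcd hbd hsep
  rintro ⟨x, y, z, u, h1, h2, hs⟩
  rw [E2_fst hab] at h1
  rw [E2_fst hcd] at h2
  rcases Sym2.eq_iff.mp h1 with ⟨rfl, rfl⟩ | ⟨rfl, rfl⟩ <;>
    rcases Sym2.eq_iff.mp h2 with ⟨rfl, rfl⟩ | ⟨rfl, rfl⟩
  · exact hns hs
  · exact hns (sep_swap_right hs)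
  · exact hns (sep_swap_left hs)
  · exact hns (sep_swap_left (sep_swap_right hs))

lemma not_onLight_E2 {a b c d : Circle} (hab : a ≠ b) (hcd : c ≠ d)
    (hac : a ≠ c) (had : a ≠ d) (hbc : b ≠ c) (hbd : b ≠ d) :
    ¬ OnLight (E2 a b) (E2 c d) := by
  rintro ⟨p, h1, h2⟩
  rw [E2_fst hab] at h1
  rw [E2_fst hcd] at h2
  rcases Sym2.mem_iff.mp h1 with rfl | rfl <;> rcases Sym2.mem_iff.mp h2 with h | h
  exacts [hac h, had h, hbc h, hbd h]

lemma strongCausal_E2 {a b c d : Circle} (hab : a ≠ b) (hcd : c ≠ d)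
    (hac : a ≠ c) (had : a ≠ d) (hbc : b ≠ c) (hbd : b ≠ d)
    (hsep : SeparatesPts a c b d) : StrongCausal (E2 a b) (E2 c d) :=
  ⟨causal_E2 hab hcd hac had hbc hbd hsep, not_onLight_E2 hab hcd hac had hbc hbd⟩

lemma tau_opp (ht5 : AxT5 line t) {a b c d : Circle} (hab : a ≠ b) (hcd : c ≠ d)
    (hac : a ≠ c) (had : a ≠ d) (hbc : b ≠ c) (hbd : b ≠ d)
    (hsep : SeparatesPts a c b d) :
    t (proj line (E2 a b) c) (proj line (E2 a b) d)
      = t (proj line (E2 c d) a) (proj line (E2 c d) b) :=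
  ht5 (E2 a b) (E2 c d) a b c d (E2_fst hab) (E2_fst hcd)
    (strongCausal_E2 hab hcd hac had hbc hbd hsep)

/-- t between projections of `q k`, `q l` onto the line dual to the event
`(q i, q j)`. -/
noncomputable def TT (q : Fin 4 → Circle) (i j k l : Fin 4) : ℝ :=
  t (proj line (E2 (q i) (q j)) (q k)) (proj line (E2 (q i) (q j)) (q l))

open Classical in
/-- The sub-Möbius structure of a timed causal space. -/
noncomputable def Mdef (q : Fin 4 → Circle) : Fin 3 → ℝ :=
  if SeparatesPts (q 0) (q 3) (q 1) (q 2) then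
    ![-(TT line t q 0 1 3 2), TT line t q 1 3 2 0,
      TT line t q 0 1 3 2 - TT line t q 1 3 2 0]
  else if SeparatesPts (q 0) (q 1) (q 2) (q 3) then
    ![TT line t q 1 3 2 0 - TT line t q 0 3 1 2, -(TT line t q 1 3 2 0),
      TT line t q 0 3 1 2]
  else if SeparatesPts (q 0) (q 2) (q 1) (q 3) then
    ![TT line t q 0 1 2 3, TT line t q 1 2 3 0 - TT line t q 0 1 2 3,
      -(TT line t q 1 2 3 0)]
  else 0

lemma Mdef_PA (q : Fin 4 → Circle) (hA : SeparatesPts (q 0) (q 3) (q 1) (q 2)) :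
    Mdef line t q = ![-(TT line t q 0 1 3 2), TT line t q 1 3 2 0,
      TT line t q 0 1 3 2 - TT line t q 1 3 2 0] := by
  rw [Mdef, if_pos hA]

lemma Mdef_PB (q : Fin 4 → Circle) (hq : Function.Injective q)
    (hB : SeparatesPts (q 0) (q 1) (q 2) (q 3)) :
    Mdef line t q = ![TT line t q 1 3 2 0 - TT line t q 0 3 1 2,
      -(TT line t q 1 3 2 0), TT line t q 0 3 1 2] := by
  have n10 : q 1 ≠ q 0 := hq.ne (by decide)
  have n30 : q 3 ≠ q 0 := hq.ne (by decide)
  have n20 : q 2 ≠ q 0 := hq.ne (by decide)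
  have n13 : q 1 ≠ q 3 := hq.ne (by decide)
  have n12 : q 1 ≠ q 2 := hq.ne (by decide)
  have n32 : q 3 ≠ q 2 := hq.ne (by decide)
  have hnA : ¬ SeparatesPts (q 0) (q 3) (q 1) (q 2) :=
    sep_excl n10 n30 n20 n13 n12 n32 (sep_swap_right hB)
  rw [Mdef, if_neg hnA, if_pos hB]

lemma Mdef_PC (q : Fin 4 → Circle) (hq : Function.Injective q)
    (hC : SeparatesPts (q 0) (q 2) (q 1) (q 3)) :
    Mdef line t q = ![TT line t q 0 1 2 3, TT line t q 1 2 3 0 - TT line t q 0 1 2 3,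
      -(TT line t q 1 2 3 0)] := by
  have n20 : q 2 ≠ q 0 := hq.ne (by decide)
  have n30 : q 3 ≠ q 0 := hq.ne (by decide)
  have n10 : q 1 ≠ q 0 := hq.ne (by decide)
  have n23 : q 2 ≠ q 3 := hq.ne (by decide)
  have n21 : q 2 ≠ q 1 := hq.ne (by decide)
  have n31 : q 3 ≠ q 1 := hq.ne (by decide)
  have hnA : ¬ SeparatesPts (q 0) (q 3) (q 1) (q 2) := fun h =>
    sep_excl n20 n30 n10 n23 n21 n31 (sep_swap_right hC) (sep_swap_right h)
  have hnB : ¬ SeparatesPts (q 0) (q 1) (q 2) (q 3) :=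
    sep_excl n20 n10 n30 n21 n23 (fun h => n31 h.symm) hC
  rw [Mdef, if_neg hnA, if_neg hnB, if_pos hC]

lemma pattern_total {q : Fin 4 → Circle} (hq : Function.Injective q) :
    SeparatesPts (q 0) (q 3) (q 1) (q 2) ∨ SeparatesPts (q 0) (q 1) (q 2) (q 3) ∨
      SeparatesPts (q 0) (q 2) (q 1) (q 3) := by
  have h := sep_total (w := q 0) (x := q 1) (y := q 2) (z := q 3)
    (hq.ne (by decide)) (hq.ne (by decide)) (hq.ne (by decide))
    (hq.ne (by decide)) (hq.ne (by decide)) (hq.ne (by decide))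
  tauto

end TimeLemmas

section Equivariance

variable (line : Event → Set Event) (t : Event → Event → ℝ)

/-- equivariance property for a fixed permutation -/
def Equi (π : Equiv.Perm (Fin 4)) : Prop :=
  ∀ q : Fin 4 → Circle, Function.Injective q → ∀ j : Fin 3,
    Mdef line t (q ∘ π) j = ((Equiv.Perm.sign π : ℤ) : ℝ) * Mdef line t q (permAct π j)

variable {line t}

lemma equi_s01 (h3 : AxH3 line) (h4 : AxH4 line) (ht3 : AxT3 t) (ht5 : AxT5 line t) :
    Equi line t (Equiv.swap 0 1) := by
  intro q hq j
  set π : Equiv.Perm (Fin 4) := Equiv.swap 0 1 with hπ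
  have hq' : Function.Injective (q ∘ π) := hq.comp π.injective
  have hsgn : ((Equiv.Perm.sign π : ℤ) : ℝ) = -1 := by
    rw [hπ]; norm_num [Equiv.Perm.sign_swap (show (0:Fin 4) ≠ 1 by decide)]
  have hPj : ∀ j : Fin 3, permAct π j = ![0, 2, 1] j := by decide
  -- distinctness
  have n01 : q 0 ≠ q 1 := hq.ne (by decide)
  have n02 : q 0 ≠ q 2 := hq.ne (by decide)
  have n03 : q 0 ≠ q 3 := hq.ne (by decide)
  have n12 : q 1 ≠ q 2 := hq.ne (by decide)
  have n13 : q 1 ≠ q 3 := hq.ne (by decide)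
  have n23 : q 2 ≠ q 3 := hq.ne (by decide)
  rcases pattern_total hq with hA | hB | hC
  · -- q in pattern A (cyclic q0 q1 q3 q2); q∘π in pattern C
    have hC' : SeparatesPts (q 1) (q 2) (q 0) (q 3) :=
      sep_pair_swap n03.symm n01.symm n02.symm (fun h => n13 h.symm)
        n23.symm n12 hA
    have h1 : Mdef line t (q ∘ π) = ![TT line t q 1 0 2 3,
        TT line t q 0 2 3 1 - TT line t q 1 0 2 3, -(TT line t q 0 2 3 1)] :=
      Mdef_PC line t (q ∘ π) hq' hC'
    have h2 := Mdef_PA line t q hA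
    have i1 : TT line t q 1 0 2 3 = TT line t q 0 1 2 3 := by
      rw [TT, TT, E2_comm]
    have i2 : TT line t q 0 1 2 3 = TT line t q 0 1 3 2 :=
      tau_comm line t h3 h4 ht3 n01 n02.symm n12.symm n03.symm n13.symm
    have i3 : TT line t q 0 2 3 1 = TT line t q 3 1 0 2 :=
      tau_opp line t ht5 n02 (fun h => n13 h.symm) n03 n01 n23 n12.symm
        (sep_swap_right hA)
    have i4 : TT line t q 3 1 0 2 = TT line t q 1 3 0 2 := by
      rw [TT, TT, E2_comm]
    have i5 : TT line t q 1 3 0 2 = TT line t q 1 3 2 0 :=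
      tau_comm line t h3 h4 ht3 n13 n01 n03 n12.symm n23
    rw [h1, h2, hsgn, hPj j]
    fin_cases j
    · show TT line t q 1 0 2 3 = -1 * -(TT line t q 0 1 3 2); linarith
    · show TT line t q 0 2 3 1 - TT line t q 1 0 2 3
        = -1 * (TT line t q 0 1 3 2 - TT line t q 1 3 2 0)
      linarith
    · show -(TT line t q 0 2 3 1) = -1 * TT line t q 1 3 2 0; linarith
  · -- q in pattern B; q∘π in pattern B
    have hB' : SeparatesPts (q 1) (q 0) (q 2) (q 3) := sep_swap_left hB
    have h1 : Mdef line t (q ∘ π) = ![TT line t q 0 3 2 1 - TT line t q 1 3 0 2,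
        -(TT line t q 0 3 2 1), TT line t q 1 3 0 2] :=
      Mdef_PB line t (q ∘ π) hq' hB'
    have h2 := Mdef_PB line t q hq hB
    have i1 : TT line t q 0 3 2 1 = TT line t q 0 3 1 2 :=
      tau_comm line t h3 h4 ht3 n03 n02.symm n23 n01.symm n13
    have i2 : TT line t q 1 3 0 2 = TT line t q 1 3 2 0 :=
      tau_comm line t h3 h4 ht3 n13 n01 n03 n12.symm n23
    rw [h1, h2, hsgn, hPj j]
    fin_cases j
    · show TT line t q 0 3 2 1 - TT line t q 1 3 0 2
        = -1 * (TT line t q 1 3 2 0 - TT line t q 0 3 1 2)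
      linarith
    · show -(TT line t q 0 3 2 1) = -1 * TT line t q 0 3 1 2; linarith
    · show TT line t q 1 3 0 2 = -1 * -(TT line t q 1 3 2 0); linarith
  · -- q in pattern C; q∘π in pattern A
    have hA' : SeparatesPts (q 1) (q 3) (q 0) (q 2) :=
      sep_pair_swap n02.symm n01.symm n03.symm n12.symm n23 n13 hC
    have h1 : Mdef line t (q ∘ π) = ![-(TT line t q 1 0 3 2), TT line t q 0 3 2 1,
        TT line t q 1 0 3 2 - TT line t q 0 3 2 1] :=
      Mdef_PA line t (q ∘ π) hA'
    have h2 := Mdef_PC line t q hq hC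
    have k1 : TT line t q 1 0 3 2 = TT line t q 0 1 3 2 := by
      rw [TT, TT, E2_comm]
    have k2 : TT line t q 0 1 3 2 = TT line t q 0 1 2 3 :=
      tau_comm line t h3 h4 ht3 n01 n03.symm n13.symm n02.symm n12.symm
    have k3 : TT line t q 0 3 2 1 = TT line t q 2 1 0 3 :=
      tau_opp line t ht5 n03 n12.symm n02 n01 n23.symm n13.symm (sep_swap_right hC)
    have k4 : TT line t q 2 1 0 3 = TT line t q 1 2 0 3 := by
      rw [TT, TT, E2_comm]
    have k5 : TT line t q 1 2 0 3 = TT line t q 1 2 3 0 :=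
      tau_comm line t h3 h4 ht3 n12 n01 n02 n13.symm n23.symm
    rw [h1, h2, hsgn, hPj j]
    fin_cases j
    · show -(TT line t q 1 0 3 2) = -1 * TT line t q 0 1 2 3; linarith
    · show TT line t q 0 3 2 1 = -1 * -(TT line t q 1 2 3 0); linarith
    · show TT line t q 1 0 3 2 - TT line t q 0 3 2 1
        = -1 * (TT line t q 1 2 3 0 - TT line t q 0 1 2 3)
      linarith

lemma equi_s12 (h3 : AxH3 line) (h4 : AxH4 line) (ht3 : AxT3 t) (ht5 : AxT5 line t) :
    Equi line t (Equiv.swap 1 2) := by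
  intro q hq j
  set π : Equiv.Perm (Fin 4) := Equiv.swap 1 2 with hπ
  have hq' : Function.Injective (q ∘ π) := hq.comp π.injective
  have hsgn : ((Equiv.Perm.sign π : ℤ) : ℝ) = -1 := by
    rw [hπ]; norm_num [Equiv.Perm.sign_swap (show (1:Fin 4) ≠ 2 by decide)]
  have hPj : ∀ j : Fin 3, permAct π j = ![1, 0, 2] j := by decide
  have n01 : q 0 ≠ q 1 := hq.ne (by decide)
  have n02 : q 0 ≠ q 2 := hq.ne (by decide)
  have n03 : q 0 ≠ q 3 := hq.ne (by decide)
  have n12 : q 1 ≠ q 2 := hq.ne (by decide)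
  have n13 : q 1 ≠ q 3 := hq.ne (by decide)
  have n23 : q 2 ≠ q 3 := hq.ne (by decide)
  rcases pattern_total hq with hA | hB | hC
  · -- q in pattern A; q∘π in pattern A
    have hA' : SeparatesPts (q 0) (q 3) (q 2) (q 1) := sep_swap_right hA
    have h1 : Mdef line t (q ∘ π) = ![-(TT line t q 0 2 3 1), TT line t q 2 3 1 0,
        TT line t q 0 2 3 1 - TT line t q 2 3 1 0] :=
      Mdef_PA line t (q ∘ π) hA'
    have h2 := Mdef_PA line t q hA
    have m1 : TT line t q 0 2 3 1 = TT line t q 3 1 0 2 :=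
      tau_opp line t ht5 n02 n13.symm n03 n01 n23 n12.symm (sep_swap_right hA)
    have m2 : TT line t q 3 1 0 2 = TT line t q 1 3 0 2 := by
      rw [TT, TT, E2_comm]
    have m3 : TT line t q 1 3 0 2 = TT line t q 1 3 2 0 :=
      tau_comm line t h3 h4 ht3 n13 n01 n03 n12.symm n23
    have m4 : TT line t q 2 3 1 0 = TT line t q 1 0 2 3 :=
      tau_opp line t ht5 n23 n01.symm n12.symm n02.symm n13.symm n03.symm
        (sep_swap_left (sep_pair_swap n03 n13 n23 n01 n02 n12
          (sep_swap_left hA)))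
    have m5 : TT line t q 1 0 2 3 = TT line t q 0 1 2 3 := by
      rw [TT, TT, E2_comm]
    have m6 : TT line t q 0 1 2 3 = TT line t q 0 1 3 2 :=
      tau_comm line t h3 h4 ht3 n01 n02.symm n12.symm n03.symm n13.symm
    rw [h1, h2, hsgn, hPj j]
    fin_cases j
    · show -(TT line t q 0 2 3 1) = -1 * TT line t q 1 3 2 0; linarith
    · show TT line t q 2 3 1 0 = -1 * -(TT line t q 0 1 3 2); linarith
    · show TT line t q 0 2 3 1 - TT line t q 2 3 1 0
        = -1 * (TT line t q 0 1 3 2 - TT line t q 1 3 2 0)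
      linarith
  · -- q in pattern B; q∘π in pattern C
    have h1 : Mdef line t (q ∘ π) = ![TT line t q 0 2 1 3,
        TT line t q 2 1 3 0 - TT line t q 0 2 1 3, -(TT line t q 2 1 3 0)] :=
      Mdef_PC line t (q ∘ π) hq' hB
    have h2 := Mdef_PB line t q hq hB
    have p1 : TT line t q 0 2 1 3 = TT line t q 1 3 0 2 :=
      tau_opp line t ht5 n02 n13 n01 n03 n12.symm n23 hB
    have p2 : TT line t q 1 3 0 2 = TT line t q 1 3 2 0 :=
      tau_comm line t h3 h4 ht3 n13 n01 n03 n12.symm n23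
    have p3 : TT line t q 2 1 3 0 = TT line t q 3 0 2 1 :=
      tau_opp line t ht5 n12.symm n03.symm n23 n02.symm n13 n01.symm
        (sep_swap_right (sep_pair_swap n01.symm n02.symm n03.symm n12 n13 n23 hB))
    have p4 : TT line t q 3 0 2 1 = TT line t q 0 3 2 1 := by
      rw [TT, TT, E2_comm]
    have p5 : TT line t q 0 3 2 1 = TT line t q 0 3 1 2 :=
      tau_comm line t h3 h4 ht3 n03 n02.symm n23 n01.symm n13
    rw [h1, h2, hsgn, hPj j]
    fin_cases j
    · show TT line t q 0 2 1 3 = -1 * -(TT line t q 1 3 2 0); linarith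
    · show TT line t q 2 1 3 0 - TT line t q 0 2 1 3
        = -1 * (TT line t q 1 3 2 0 - TT line t q 0 3 1 2)
      linarith
    · show -(TT line t q 2 1 3 0) = -1 * TT line t q 0 3 1 2; linarith
  · -- q in pattern C; q∘π in pattern B
    have h1 : Mdef line t (q ∘ π) = ![TT line t q 2 3 1 0 - TT line t q 0 3 2 1,
        -(TT line t q 2 3 1 0), TT line t q 0 3 2 1] :=
      Mdef_PB line t (q ∘ π) hq' hC
    have h2 := Mdef_PC line t q hq hC
    have r1 : TT line t q 2 3 1 0 = TT line t q 2 3 0 1 :=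
      tau_comm line t h3 h4 ht3 n23 n12 n13 n02 n03
    have r2 : TT line t q 2 3 0 1 = TT line t q 0 1 2 3 :=
      tau_opp line t ht5 n23 n01 n02.symm n12.symm n03.symm n13.symm
        (sep_swap_right (sep_swap_left hC))
    have r3 : TT line t q 0 3 2 1 = TT line t q 2 1 0 3 :=
      tau_opp line t ht5 n03 n12.symm n02 n01 n23.symm n13.symm (sep_swap_right hC)
    have r4 : TT line t q 2 1 0 3 = TT line t q 1 2 0 3 := by
      rw [TT, TT, E2_comm]
    have r5 : TT line t q 1 2 0 3 = TT line t q 1 2 3 0 :=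
      tau_comm line t h3 h4 ht3 n12 n01 n02 n13.symm n23.symm
    rw [h1, h2, hsgn, hPj j]
    fin_cases j
    · show TT line t q 2 3 1 0 - TT line t q 0 3 2 1
        = -1 * (TT line t q 1 2 3 0 - TT line t q 0 1 2 3)
      linarith
    · show -(TT line t q 2 3 1 0) = -1 * TT line t q 0 1 2 3; linarith
    · show TT line t q 0 3 2 1 = -1 * -(TT line t q 1 2 3 0); linarith

lemma equi_s23 (h3 : AxH3 line) (h4 : AxH4 line) (ht3 : AxT3 t) (ht5 : AxT5 line t) :
    Equi line t (Equiv.swap 2 3) := by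
  intro q hq j
  set π : Equiv.Perm (Fin 4) := Equiv.swap 2 3 with hπ
  have hq' : Function.Injective (q ∘ π) := hq.comp π.injective
  have hsgn : ((Equiv.Perm.sign π : ℤ) : ℝ) = -1 := by
    rw [hπ]; norm_num [Equiv.Perm.sign_swap (show (2:Fin 4) ≠ 3 by decide)]
  have hPj : ∀ j : Fin 3, permAct π j = ![0, 2, 1] j := by decide
  have n01 : q 0 ≠ q 1 := hq.ne (by decide)
  have n02 : q 0 ≠ q 2 := hq.ne (by decide)
  have n03 : q 0 ≠ q 3 := hq.ne (by decide)
  have n12 : q 1 ≠ q 2 := hq.ne (by decide)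
  have n13 : q 1 ≠ q 3 := hq.ne (by decide)
  have n23 : q 2 ≠ q 3 := hq.ne (by decide)
  rcases pattern_total hq with hA | hB | hC
  · -- q in pattern A; q∘π in pattern C
    have h1 : Mdef line t (q ∘ π) = ![TT line t q 0 1 3 2,
        TT line t q 1 3 2 0 - TT line t q 0 1 3 2, -(TT line t q 1 3 2 0)] :=
      Mdef_PC line t (q ∘ π) hq' hA
    have h2 := Mdef_PA line t q hA
    rw [h1, h2, hsgn, hPj j]
    fin_cases j
    · show TT line t q 0 1 3 2 = -1 * -(TT line t q 0 1 3 2); ring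
    · show TT line t q 1 3 2 0 - TT line t q 0 1 3 2
        = -1 * (TT line t q 0 1 3 2 - TT line t q 1 3 2 0)
      ring
    · show -(TT line t q 1 3 2 0) = -1 * TT line t q 1 3 2 0; ring
  · -- q in pattern B; q∘π in pattern B
    have hB' : SeparatesPts (q 0) (q 1) (q 3) (q 2) := sep_swap_right hB
    have h1 : Mdef line t (q ∘ π) = ![TT line t q 1 2 3 0 - TT line t q 0 2 1 3,
        -(TT line t q 1 2 3 0), TT line t q 0 2 1 3] :=
      Mdef_PB line t (q ∘ π) hq' hB'
    have h2 := Mdef_PB line t q hq hB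
    have s1 : TT line t q 1 2 3 0 = TT line t q 2 1 3 0 := by
      rw [TT, TT, E2_comm]
    have s2 : TT line t q 2 1 3 0 = TT line t q 3 0 2 1 :=
      tau_opp line t ht5 n12.symm n03.symm n23 n02.symm n13 n01.symm
        (sep_swap_right (sep_pair_swap n01.symm n02.symm n03.symm n12 n13 n23 hB))
    have s3 : TT line t q 3 0 2 1 = TT line t q 0 3 2 1 := by
      rw [TT, TT, E2_comm]
    have s4 : TT line t q 0 3 2 1 = TT line t q 0 3 1 2 :=
      tau_comm line t h3 h4 ht3 n03 n02.symm n23 n01.symm n13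
    have s5 : TT line t q 0 2 1 3 = TT line t q 1 3 0 2 :=
      tau_opp line t ht5 n02 n13 n01 n03 n12.symm n23 hB
    have s6 : TT line t q 1 3 0 2 = TT line t q 1 3 2 0 :=
      tau_comm line t h3 h4 ht3 n13 n01 n03 n12.symm n23
    rw [h1, h2, hsgn, hPj j]
    fin_cases j
    · show TT line t q 1 2 3 0 - TT line t q 0 2 1 3
        = -1 * (TT line t q 1 3 2 0 - TT line t q 0 3 1 2)
      linarith
    · show -(TT line t q 1 2 3 0) = -1 * TT line t q 0 3 1 2; linarith
    · show TT line t q 0 2 1 3 = -1 * -(TT line t q 1 3 2 0); linarith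
  · -- q in pattern C; q∘π in pattern A
    have h1 : Mdef line t (q ∘ π) = ![-(TT line t q 0 1 2 3), TT line t q 1 2 3 0,
        TT line t q 0 1 2 3 - TT line t q 1 2 3 0] :=
      Mdef_PA line t (q ∘ π) hC
    have h2 := Mdef_PC line t q hq hC
    rw [h1, h2, hsgn, hPj j]
    fin_cases j
    · show -(TT line t q 0 1 2 3) = -1 * TT line t q 0 1 2 3; ring
    · show TT line t q 1 2 3 0 = -1 * -(TT line t q 1 2 3 0); ring
    · show TT line t q 0 1 2 3 - TT line t q 1 2 3 0
        = -1 * (TT line t q 1 2 3 0 - TT line t q 0 1 2 3)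
      ring

set_option maxRecDepth 40000 in
lemma permAct_mul : ∀ (π π' : Equiv.Perm (Fin 4)) (j : Fin 3),
    permAct (π * π') j = permAct π (permAct π' j) := by decide

set_option maxRecDepth 40000 in
lemma permAct_inv_cancel : ∀ (π : Equiv.Perm (Fin 4)) (j : Fin 3),
    permAct π (permAct π⁻¹ j) = j := by decide

lemma isSwap_cases : ∀ σ : Equiv.Perm (Fin 4), σ.IsSwap →
    σ = Equiv.swap 0 1 ∨ σ = Equiv.swap 1 2 ∨ σ = Equiv.swap 2 3 ∨
    σ = Equiv.swap 0 2 ∨ σ = Equiv.swap 1 3 ∨ σ = Equiv.swap 0 3 := by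
  rintro σ ⟨x, y, hxy, rfl⟩
  revert hxy; revert x y; decide

lemma equi_one : Equi line t 1 := by
  intro q hq j
  have h0 : q ∘ ⇑(1 : Equiv.Perm (Fin 4)) = q := by
    funext x; simp
  have hp : permAct 1 j = j := by revert j; decide
  rw [h0, hp]
  simp

lemma equi_mul {π π' : Equiv.Perm (Fin 4)} (hx : Equi line t π) (hy : Equi line t π') :
    Equi line t (π * π') := by
  intro q hq j
  have hc : q ∘ ⇑(π * π') = (q ∘ ⇑π) ∘ ⇑π' := by
    funext x; simp [Equiv.Perm.mul_apply]
  rw [hc, hy (q ∘ π) (hq.comp π.injective) j, hx q hq (permAct π' j),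
    permAct_mul, map_mul]
  push_cast
  ring

lemma equi_inv {π : Equiv.Perm (Fin 4)} (hx : Equi line t π) : Equi line t π⁻¹ := by
  intro q hq j
  have hre := hx (q ∘ ⇑π⁻¹) (hq.comp π⁻¹.injective) (permAct π⁻¹ j)
  have hc : (q ∘ ⇑π⁻¹) ∘ ⇑π = q := by
    funext x; simp
  rw [hc, permAct_inv_cancel] at hre
  have hsgn : ((Equiv.Perm.sign π⁻¹ : ℤ) : ℝ) = ((Equiv.Perm.sign π : ℤ) : ℝ) := by
    rw [Equiv.Perm.sign_inv]
  rw [hsgn]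
  rcases Int.units_eq_one_or (Equiv.Perm.sign π) with hs | hs <;>
    rw [hs] at hre ⊢ <;> push_cast at hre ⊢ <;> linarith

lemma equi_all (h3 : AxH3 line) (h4 : AxH4 line) (ht3 : AxT3 t) (ht5 : AxT5 line t) :
    ∀ π : Equiv.Perm (Fin 4), Equi line t π := by
  have h01 := equi_s01 h3 h4 ht3 ht5
  have h12 := equi_s12 h3 h4 ht3 ht5
  have h23 := equi_s23 h3 h4 ht3 ht5
  have h02 : Equi line t (Equiv.swap 0 2) := by
    rw [show (Equiv.swap (0:Fin 4) 2)
        = Equiv.swap 0 1 * Equiv.swap 1 2 * Equiv.swap 0 1 from by decide]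
    exact equi_mul (equi_mul h01 h12) h01
  have h13 : Equi line t (Equiv.swap 1 3) := by
    rw [show (Equiv.swap (1:Fin 4) 3)
        = Equiv.swap 1 2 * Equiv.swap 2 3 * Equiv.swap 1 2 from by decide]
    exact equi_mul (equi_mul h12 h23) h12
  have h03 : Equi line t (Equiv.swap 0 3) := by
    rw [show (Equiv.swap (0:Fin 4) 3)
        = Equiv.swap 2 3 * Equiv.swap 0 2 * Equiv.swap 2 3 from by decide]
    exact equi_mul (equi_mul h23 h02) h23
  intro π
  have hmem : π ∈ Subgroup.closure {σ : Equiv.Perm (Fin 4) | σ.IsSwap} := by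
    rw [Equiv.Perm.closure_isSwap]; exact Subgroup.mem_top π
  refine Subgroup.closure_induction ?_ equi_one
    (fun x y _ _ hx hy => equi_mul hx hy) (fun x _ hx => equi_inv hx) hmem
  intro σ hσ
  rcases isSwap_cases σ hσ with rfl | rfl | rfl | rfl | rfl | rfl <;> assumption

end Equivariance


/-- for any timed causal space `T = (aY, H, t)`, the prescription
`M(q) = (−t_{xy}, t_{yu}, t_{xy} − t_{yu})` on 4-tuples obtained from their cyclic
order `xyuz` by fixing the initial point and transposing the two last entries,
extended by the signed cross-ratio equivariance, defines unambiguously a map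
`regP₄ → L₄` which is a sub-Möbius structure on the circle. -/
theorem stmt8 (line : Event → Set Event) (t : Event → Event → ℝ)
    (h1 : AxH1 (Set.range line) line) (h2 : AxH2 line) (h3 : AxH3 line)
    (h4 : AxH4 line) (h5 : AxH5 line) (h6 : AxH6 line)
    (ht1 : AxT1 t) (ht2 : AxT2 t) (ht3 : AxT3 t) (ht4a : AxT4a line t)
    (ht4b : AxT4b line t) (ht5 : AxT5 line t) (ht6 : AxT6 line t) :
    ∃ M : (Fin 4 → Circle) → Fin 3 → ℝ, BaseSpec line t M ∧ SubMoebius M ∧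
      ∀ M' : (Fin 4 → Circle) → Fin 3 → ℝ, BaseSpec line t M' → SubMoebius M' →
        ∀ q : Fin 4 → Circle, Function.Injective q → M' q = M q := by
  classical
  refine ⟨Mdef line t, ?_, ?_, ?_⟩
  · -- BaseSpec
    intro q hq hsep exy eyu hxy hyu
    have n01 : q 0 ≠ q 1 := hq.ne (by decide)
    have n13 : q 1 ≠ q 3 := hq.ne (by decide)
    have hxyE : exy = E2 (q 0) (q 1) := Subtype.ext (by rw [hxy, E2_fst n01])
    have hyuE : eyu = E2 (q 1) (q 3) := Subtype.ext (by rw [hyu, E2_fst n13])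
    subst hxyE hyuE
    rw [Mdef_PA line t q hsep]
    exact ⟨rfl, rfl, rfl⟩
  · -- SubMoebius
    constructor
    · intro q hq
      rcases pattern_total hq with hA | hB | hC
      · rw [Mdef_PA line t q hA]
        show -(TT line t q 0 1 3 2) + TT line t q 1 3 2 0
          + (TT line t q 0 1 3 2 - TT line t q 1 3 2 0) = 0
        ring
      · rw [Mdef_PB line t q hq hB]
        show TT line t q 1 3 2 0 - TT line t q 0 3 1 2 + -(TT line t q 1 3 2 0)
          + TT line t q 0 3 1 2 = 0
        ring
      · rw [Mdef_PC line t q hq hC]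
        show TT line t q 0 1 2 3 + (TT line t q 1 2 3 0 - TT line t q 0 1 2 3)
          + -(TT line t q 1 2 3 0) = 0
        ring
    · intro q hq π j
      exact equi_all h3 h4 ht3 ht5 π q hq j
  · -- uniqueness
    intro N hbase hsub q hq
    have n01 : q 0 ≠ q 1 := hq.ne (by decide)
    have n03 : q 0 ≠ q 3 := hq.ne (by decide)
    have n12 : q 1 ≠ q 2 := hq.ne (by decide)
    have n13 : q 1 ≠ q 3 := hq.ne (by decide)
    rcases pattern_total hq with hA | hB | hC
    · obtain ⟨e0, e1, e2⟩ := hbase q hq hA (E2 (q 0) (q 1)) (E2 (q 1) (q 3))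
        (E2_fst n01) (E2_fst n13)
      rw [Mdef_PA line t q hA]
      funext j; fin_cases j
      · exact e0
      · exact e1
      · exact e2
    · -- pattern B : reduce along σ = swap 1 3
      set σ : Equiv.Perm (Fin 4) := Equiv.swap 1 3 with hσdef
      have hqσ : Function.Injective (q ∘ σ) := hq.comp σ.injective
      have hA' : SeparatesPts ((q ∘ σ) 0) ((q ∘ σ) 3) ((q ∘ σ) 1) ((q ∘ σ) 2) :=
        sep_swap_right hB
      obtain ⟨e0, e1, e2⟩ := hbase (q ∘ σ) hqσ hA' (E2 (q 0) (q 3)) (E2 (q 3) (q 1))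
        (E2_fst n03) (E2_fst n13.symm)
      have f0 : N (q ∘ σ) 0 = -(TT line t q 0 3 1 2) := e0
      have f1 : N (q ∘ σ) 1 = TT line t q 3 1 2 0 := e1
      have f2 : N (q ∘ σ) 2 = TT line t q 0 3 1 2 - TT line t q 3 1 2 0 := e2
      have iL : TT line t q 3 1 2 0 = TT line t q 1 3 2 0 := by
        rw [TT, TT, E2_comm]
      have hsgn : ((Equiv.Perm.sign σ : ℤ) : ℝ) = -1 := by
        rw [hσdef]; norm_num [Equiv.Perm.sign_swap (show (1:Fin 4) ≠ 3 by decide)]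
      have hp0 : permAct σ 0 = 2 := by rw [hσdef]; decide
      have hp1 : permAct σ 1 = 1 := by rw [hσdef]; decide
      have hp2 : permAct σ 2 = 0 := by rw [hσdef]; decide
      have v0 := hsub.2 q hq σ 0; rw [hsgn, hp0] at v0
      have v1 := hsub.2 q hq σ 1; rw [hsgn, hp1] at v1
      have v2 := hsub.2 q hq σ 2; rw [hsgn, hp2] at v2
      rw [Mdef_PB line t q hq hB]
      funext j; fin_cases j
      · show N q 0 = TT line t q 1 3 2 0 - TT line t q 0 3 1 2
        linarith
      · show N q 1 = -(TT line t q 1 3 2 0)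
        linarith
      · show N q 2 = TT line t q 0 3 1 2
        linarith
    · -- pattern C : reduce along σ = swap 2 3
      set σ : Equiv.Perm (Fin 4) := Equiv.swap 2 3 with hσdef
      have hqσ : Function.Injective (q ∘ σ) := hq.comp σ.injective
      have hA' : SeparatesPts ((q ∘ σ) 0) ((q ∘ σ) 3) ((q ∘ σ) 1) ((q ∘ σ) 2) := hC
      obtain ⟨e0, e1, e2⟩ := hbase (q ∘ σ) hqσ hA' (E2 (q 0) (q 1)) (E2 (q 1) (q 2))
        (E2_fst n01) (E2_fst n12)
      have f0 : N (q ∘ σ) 0 = -(TT line t q 0 1 2 3) := e0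
      have f1 : N (q ∘ σ) 1 = TT line t q 1 2 3 0 := e1
      have f2 : N (q ∘ σ) 2 = TT line t q 0 1 2 3 - TT line t q 1 2 3 0 := e2
      have hsgn : ((Equiv.Perm.sign σ : ℤ) : ℝ) = -1 := by
        rw [hσdef]; norm_num [Equiv.Perm.sign_swap (show (2:Fin 4) ≠ 3 by decide)]
      have hp0 : permAct σ 0 = 0 := by rw [hσdef]; decide
      have hp1 : permAct σ 1 = 2 := by rw [hσdef]; decide
      have hp2 : permAct σ 2 = 1 := by rw [hσdef]; decide
      have v0 := hsub.2 q hq σ 0; rw [hsgn, hp0] at v0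
      have v1 := hsub.2 q hq σ 1; rw [hsgn, hp1] at v1
      have v2 := hsub.2 q hq σ 2; rw [hsgn, hp2] at v2
      rw [Mdef_PC line t q hq hC]
      funext j; fin_cases j
      · show N q 0 = TT line t q 0 1 2 3
        linarith
      · show N q 1 = TT line t q 1 2 3 0 - TT line t q 0 1 2 3
        linarith
      · show N q 2 = -(TT line t q 1 2 3 0)
        linarith


end Paper
end
end

section
/- For every d > 0 and every ε > 0 there exist δ > 0 and T > 0 with the following property: for any triangle with vertices x, y, z in the Euclidean plane ℝ² such that dist(y,z) ≤ d, dist(x,y) ≥ T, dist(x,z) ≥ T, and the angle of the triangle at z (between the segments zx and zy) and the angle at y (between yx and yz) are both at least π/2 − δ, one has |dist(x,y) − dist(x,z)| ≤ ε. -/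
/-- for every `d > 0` and `ε > 0` there are `δ > 0` and `T > 0` such
that every Euclidean triangle `x y z` with `dist y z ≤ d`, `dist x y ≥ T`,
`dist x z ≥ T`, whose angles at `z` and at `y` are at least `π/2 − δ`, satisfies
`|dist x y − dist x z| ≤ ε`. -/
theorem stmt18 (d ε : ℝ) (hd : 0 < d) (hε : 0 < ε) :
    ∃ δ T : ℝ, 0 < δ ∧ 0 < T ∧
      ∀ x y z : EuclideanSpace ℝ (Fin 2),
        dist y z ≤ d → T ≤ dist x y → T ≤ dist x z →
        Real.pi / 2 - δ ≤ EuclideanGeometry.angle x z y →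
        Real.pi / 2 - δ ≤ EuclideanGeometry.angle x y z →
        |dist x y - dist x z| ≤ ε := by
  have hπ := Real.pi_pos
  refine ⟨min (ε / (2 * d)) (Real.pi / 2), 1, ?_, one_pos, ?_⟩
  · exact lt_min (by positivity) (by positivity)
  intro x y z hc hTa hTb hγ hβ
  set δ := min (ε / (2 * d)) (Real.pi / 2) with hδdef
  have hδ0 : 0 ≤ δ := le_min (by positivity) (by positivity)
  have hδπ : δ ≤ Real.pi / 2 := min_le_right _ _
  have hδε : δ ≤ ε / (2 * d) := min_le_left _ _
  have hs : Real.sin δ ≤ δ := Real.sin_le hδ0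
  have hs0 : 0 ≤ Real.sin δ := Real.sin_nonneg_of_nonneg_of_le_pi hδ0 (by linarith)
  have key : ∀ p q r : EuclideanSpace ℝ (Fin 2),
      Real.pi / 2 - δ ≤ EuclideanGeometry.angle p q r →
      Real.cos (EuclideanGeometry.angle p q r) ≤ Real.sin δ := by
    intro p q r h
    have h1 : Real.cos (EuclideanGeometry.angle p q r) ≤ Real.cos (Real.pi / 2 - δ) :=
      Real.cos_le_cos_of_nonneg_of_le_pi (by linarith)
        (EuclideanGeometry.angle_le_pi _ _ _) h
    rwa [Real.cos_pi_div_two_sub] at h1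
  have hcz := key x z y hγ
  have hcy := key x y z hβ
  have lz := EuclideanGeometry.law_cos x z y
  have ly := EuclideanGeometry.law_cos x y z
  have hzy : dist z y = dist y z := dist_comm z y
  have hxz : dist x z ≥ 0 := dist_nonneg
  have hxy : dist x y ≥ 0 := dist_nonneg
  have hyz : dist y z ≥ 0 := dist_nonneg
  rw [hzy] at ly
  -- from law of cosines at z: (dist x y)^2 ≥ (dist x z)^2 - 2 * dist x z * dist y z * sin δ
  have hab : (0:ℝ) < dist x y + dist x z := by linarith
  have step : ∀ u : ℝ, 0 ≤ u → u ≤ dist x y + dist x z →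
      2 * u * dist y z * Real.sin δ ≤ 2 * d * Real.sin δ * (dist x y + dist x z) := by
    intro u hu hus
    have h1 : u * dist y z ≤ (dist x y + dist x z) * d := by
      apply mul_le_mul hus hc hyz (by linarith)
    nlinarith
  have h1 : dist x z - dist x y ≤ 2 * d * Real.sin δ := by
    have hb : (dist x z - dist x y) * (dist x y + dist x z)
        ≤ (2 * d * Real.sin δ) * (dist x y + dist x z) := by
      have hm : 2 * dist x z * dist y z * Real.cos (EuclideanGeometry.angle x z y)
          ≤ 2 * dist x z * dist y z * Real.sin δ :=
        mul_le_mul_of_nonneg_left hcz (by positivity)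
      have hst := step (dist x z) hxz (by linarith)
      nlinarith [mul_self_nonneg (dist y z)]
    exact le_of_mul_le_mul_right hb hab
  have h2 : dist x y - dist x z ≤ 2 * d * Real.sin δ := by
    have hb : (dist x y - dist x z) * (dist x y + dist x z)
        ≤ (2 * d * Real.sin δ) * (dist x y + dist x z) := by
      have hm : 2 * dist x y * dist y z * Real.cos (EuclideanGeometry.angle x y z)
          ≤ 2 * dist x y * dist y z * Real.sin δ :=
        mul_le_mul_of_nonneg_left hcy (by positivity)
      have hst := step (dist x y) hxy (by linarith)
      nlinarith [mul_self_nonneg (dist y z)]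
    exact le_of_mul_le_mul_right hb hab
  have hfin : 2 * d * Real.sin δ ≤ ε := by
    have ha : 2 * d * Real.sin δ ≤ 2 * d * δ :=
      mul_le_mul_of_nonneg_left hs (by positivity)
    have hb2 : 2 * d * δ ≤ 2 * d * (ε / (2 * d)) :=
      mul_le_mul_of_nonneg_left hδε (by positivity)
    have h3 : 2 * d * (ε / (2 * d)) = ε := by field_simp
    linarith
  rw [abs_le]
  constructor <;> linarith
end
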